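/- Additivity of the predimension over free amalgams: let α ≥ 0 be real and let A, B_0, …, B_{n−1} be finite sets of vertices of a simple graph G such that A ⊆ B_i for each i, B_i ∩ B_j = A for all i ≠ j, and no edge of G joins a vertex of B_i \ A to a vertex of B_j \ A for i ≠ j. Then δ_α(B_0 ∪ … ∪ B_{n−1}) − δ_α(A) = Σ_{i<n} (δ_α(B_i) − δ_α(A)). -/

import Mathlib

/-- The number of edges of `G` with both endpoints in the finite set `s`. -/
noncomputable def eCount {V : Type*} (G : SimpleGraph V) (s : Finset V) : ℕ :=
  {e : Sym2 V | e ∈ G.edgeSet ∧ ∀ v ∈ e, v ∈ s}.ncard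

/-- The predimension `δ_α(s) = |s| - α·e(s)`. -/
noncomputable def pdim {V : Type*} (G : SimpleGraph V) (α : ℝ) (s : Finset V) : ℝ :=
  (s.card : ℝ) - α * (eCount G s : ℝ)

section Aux
variable {V : Type*} [DecidableEq V] (G : SimpleGraph V)

lemma eSet_finite (s : Finset V) :
    {e : Sym2 V | e ∈ G.edgeSet ∧ ∀ v ∈ e, v ∈ s}.Finite := by
  apply Set.Finite.subset s.sym2.finite_toSet
  intro e he
  exact Finset.mem_coe.2 (Finset.mem_sym2_iff.2 he.2)

/-- The finset of edges within `s`. -/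
noncomputable def ESF (s : Finset V) : Finset (Sym2 V) := (eSet_finite G s).toFinset

lemma mem_ESF {s : Finset V} {e : Sym2 V} :
    e ∈ ESF G s ↔ e ∈ G.edgeSet ∧ ∀ v ∈ e, v ∈ s := Set.Finite.mem_toFinset _

lemma eCount_eq (s : Finset V) : eCount G s = (ESF G s).card :=
  Set.ncard_eq_toFinset_card _ _

lemma ESF_mono {s t : Finset V} (h : s ⊆ t) : ESF G s ⊆ ESF G t := by
  intro e he
  rw [mem_ESF] at he ⊢
  exact ⟨he.1, fun v hv => h (he.2 v hv)⟩

end Aux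

/-- Additivity of the predimension over free amalgams. -/
theorem pdim_free_amalgam_additive {V : Type*} [DecidableEq V] (G : SimpleGraph V)
    (α : ℝ) (hα : 0 ≤ α) (n : ℕ) (hn : 0 < n) (A : Finset V) (B : Fin n → Finset V)
    (hsub : ∀ i, A ⊆ B i)
    (hinter : ∀ i j, i ≠ j → B i ∩ B j = A)
    (hfree : ∀ i j, i ≠ j → ∀ u ∈ B i \ A, ∀ v ∈ B j \ A, ¬ G.Adj u v) :
    pdim G α (Finset.univ.biUnion B) - pdim G α A
      = ∑ i : Fin n, (pdim G α (B i) - pdim G α A) := by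
  classical
  set U : Finset V := Finset.univ.biUnion B with hU
  -- vertex count
  have hUdecomp : U = A ∪ Finset.univ.biUnion (fun i => B i \ A) := by
    ext v
    simp only [hU, Finset.mem_biUnion, Finset.mem_union, Finset.mem_sdiff, Finset.mem_univ,
      true_and]
    constructor
    · rintro ⟨i, hi⟩
      by_cases hv : v ∈ A
      · exact Or.inl hv
      · exact Or.inr ⟨i, hi, hv⟩
    · rintro (hv | ⟨i, hi, -⟩)
      · exact ⟨⟨0, hn⟩, hsub _ hv⟩
      · exact ⟨i, hi⟩
  have hdisjV : ∀ i ∈ (Finset.univ : Finset (Fin n)), ∀ j ∈ Finset.univ, i ≠ j →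
      Disjoint (B i \ A) (B j \ A) := by
    intro i _ j _ hij
    rw [Finset.disjoint_left]
    intro v hvi hvj
    rw [Finset.mem_sdiff] at hvi hvj
    exact hvi.2 (by rw [← hinter i j hij]; exact Finset.mem_inter.2 ⟨hvi.1, hvj.1⟩)
  have hcardU : (U.card : ℝ) = A.card + ∑ i : Fin n, ((B i).card - (A.card : ℝ)) := by
    have h1 : U.card = A.card + ∑ i : Fin n, (B i \ A).card := by
      rw [hUdecomp, Finset.card_union_of_disjoint, Finset.card_biUnion hdisjV]
      rw [Finset.disjoint_left]
      intro v hv hv'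
      rw [Finset.mem_biUnion] at hv'
      obtain ⟨i, -, hi⟩ := hv'
      exact (Finset.mem_sdiff.1 hi).2 hv
    have h2 : ∀ i : Fin n, ((B i \ A).card : ℝ) = (B i).card - A.card := by
      intro i
      rw [Finset.card_sdiff_of_subset (hsub i)]
      push_cast [Nat.cast_sub (Finset.card_le_card (hsub i))]
      ring
    rw [h1]
    push_cast
    rw [Finset.sum_congr rfl (fun i _ => h2 i)]
  -- edge count
  have hEdecomp : ESF G U = ESF G A ∪ Finset.univ.biUnion (fun i => ESF G (B i) \ ESF G A) := by
    ext e
    simp only [Finset.mem_union, Finset.mem_biUnion, Finset.mem_sdiff, Finset.mem_univ, true_and]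
    constructor
    · intro he
      by_cases heA : e ∈ ESF G A
      · exact Or.inl heA
      · right
        rw [mem_ESF] at he
        obtain ⟨hedge, hmem⟩ := he
        induction e with
        | _ u v =>
          have hu : u ∈ U := hmem u (Sym2.mem_mk_left u v)
          have hv : v ∈ U := hmem v (Sym2.mem_mk_right u v)
          rw [hU, Finset.mem_biUnion] at hu hv
          obtain ⟨i, -, hui⟩ := hu
          obtain ⟨j, -, hvj⟩ := hv
          have key : ∃ k, u ∈ B k ∧ v ∈ B k := by
            by_cases hij : i = j
            · exact ⟨i, hui, hij ▸ hvj⟩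
            · by_cases huA : u ∈ A
              · exact ⟨j, hsub j huA, hvj⟩
              · by_cases hvA : v ∈ A
                · exact ⟨i, hui, hsub i hvA⟩
                · exact absurd (G.mem_edgeSet.1 hedge)
                    (hfree i j hij u (Finset.mem_sdiff.2 ⟨hui, huA⟩)
                      v (Finset.mem_sdiff.2 ⟨hvj, hvA⟩))
          obtain ⟨k, hk1, hk2⟩ := key
          refine ⟨k, mem_ESF G |>.2 ⟨hedge, ?_⟩, heA⟩
          intro w hw
          rcases Sym2.mem_iff.1 hw with rfl | rfl
          · exact hk1
          · exact hk2
    · rintro (he | ⟨i, he, -⟩)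
      · refine ESF_mono G ?_ he
        intro v hv
        rw [hU, Finset.mem_biUnion]
        exact ⟨⟨0, hn⟩, Finset.mem_univ _, hsub _ hv⟩
      · refine ESF_mono G ?_ he
        intro v hv
        rw [hU, Finset.mem_biUnion]
        exact ⟨i, Finset.mem_univ _, hv⟩
  have hdisjE : ∀ i ∈ (Finset.univ : Finset (Fin n)), ∀ j ∈ Finset.univ, i ≠ j →
      Disjoint (ESF G (B i) \ ESF G A) (ESF G (B j) \ ESF G A) := by
    intro i _ j _ hij
    rw [Finset.disjoint_left]
    intro e hei hej
    rw [Finset.mem_sdiff] at hei hej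
    apply hei.2
    rw [mem_ESF] at hei hej ⊢
    refine ⟨hei.1.1, fun v hv => ?_⟩
    rw [← hinter i j hij]
    exact Finset.mem_inter.2 ⟨hei.1.2 v hv, hej.1.2 v hv⟩
  have heCardU : ((eCount G U : ℝ)) = eCount G A
      + ∑ i : Fin n, ((eCount G (B i) : ℝ) - eCount G A) := by
    have h1 : (ESF G U).card = (ESF G A).card + ∑ i : Fin n, (ESF G (B i) \ ESF G A).card := by
      rw [hEdecomp, Finset.card_union_of_disjoint, Finset.card_biUnion hdisjE]
      rw [Finset.disjoint_left]
      intro e he he'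
      rw [Finset.mem_biUnion] at he'
      obtain ⟨i, -, hi⟩ := he'
      exact (Finset.mem_sdiff.1 hi).2 he
    have h2 : ∀ i : Fin n, ((ESF G (B i) \ ESF G A).card : ℝ)
        = (ESF G (B i)).card - (ESF G A).card := by
      intro i
      rw [Finset.card_sdiff_of_subset (ESF_mono G (hsub i))]
      push_cast [Nat.cast_sub (Finset.card_le_card (ESF_mono G (hsub i)))]
      ring
    simp only [eCount_eq]
    rw [h1]
    push_cast
    rw [Finset.sum_congr rfl (fun i _ => h2 i)]
  simp only [pdim]
  rw [hcardU, heCardU, mul_add]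
  rw [show (∑ i : Fin n, (((B i).card : ℝ) - α * (eCount G (B i) : ℝ)
        - ((A.card : ℝ) - α * (eCount G A : ℝ))))
      = ∑ i : Fin n, ((((B i).card : ℝ) - (A.card : ℝ))
        - α * ((eCount G (B i) : ℝ) - (eCount G A : ℝ))) from
    Finset.sum_congr rfl fun i _ => by ring]
  simp only [Finset.sum_sub_distrib, Finset.mul_sum, mul_sub]
  ring
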